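/- Let G₁ and G₂ be simple connected graphs of orders m and n respectively, let u ∈ V(G₁) and v ∈ V(G₂), and let G be the graph obtained from G₁ and G₂ by identifying u with v. Let f₁ be a harmonic eigenfunction associated with ρ(𝓛(G₁)). If f₁(u) = 0, then ρ(𝓛(G)) ≥ ρ(𝓛(G₁)). -/

import Mathlib

open Matrix Finset BigOperators

namespace NLap

variable {V : Type} [Fintype V] [DecidableEq V]

/-- The normalized Laplacian matrix `𝓛(G) = D^{-1/2} (D - A) D^{-1/2}` of a simple graph. -/
noncomputable def normLap (G : SimpleGraph V) [DecidableRel G.Adj] : Matrix V V ℝ :=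
  Matrix.diagonal (fun v => (Real.sqrt (G.degree v : ℝ))⁻¹) * G.lapMatrix ℝ *
    Matrix.diagonal (fun v => (Real.sqrt (G.degree v : ℝ))⁻¹)

/-- The `k`-th smallest eigenvalue (1-indexed, counted with multiplicity) of a real matrix:
the `k`-th element of the sorted multiset of roots of its characteristic polynomial. -/
noncomputable def nthEig (M : Matrix V V ℝ) (k : ℕ) : ℝ :=
  (M.charpoly.roots.sort (· ≤ ·)).getD (k - 1) 0

/-- `λ₂(G)`, the second smallest normalized Laplacian eigenvalue. -/
noncomputable def lambda2 (G : SimpleGraph V) [DecidableRel G.Adj] : ℝ :=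
  nthEig (normLap G) 2

/-- `ρ(𝓛(G)) = λ_n(G)`, the normalized Laplacian spectral radius. -/
noncomputable def rhoL (G : SimpleGraph V) [DecidableRel G.Adj] : ℝ :=
  nthEig (normLap G) (Fintype.card V)

/-- `f` is a harmonic eigenfunction associated with the eigenvalue `lam` of `𝓛(G)`:
`f ≠ 0` and `L f = lam • D f`. -/
def IsHarmonic (G : SimpleGraph V) [DecidableRel G.Adj] (lam : ℝ) (f : V → ℝ) : Prop :=
  f ≠ 0 ∧ G.lapMatrix ℝ *ᵥ f = fun v => lam * ((G.degree v : ℝ) * f v)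

/-- `∑_{uv ∈ E(G)} (f(u) - f(v))²`. -/
noncomputable def edgeSum (G : SimpleGraph V) [DecidableRel G.Adj] (f : V → ℝ) : ℝ :=
  ∑ e ∈ G.edgeFinset, Sym2.lift ⟨fun u v => (f u - f v) ^ 2, fun u v => by ring⟩ e


/-- The graph obtained from `G` by subdividing the edge `uv`:
delete `uv`, add a new vertex `w = Sum.inr ()` and the edges `uw`, `wv`. -/
def subdivide {V : Type} (G : SimpleGraph V) (u v : V) : SimpleGraph (V ⊕ Unit) where
  Adj x y :=
    match x, y with
    | Sum.inl a, Sum.inl b => G.Adj a b ∧ ¬(a = u ∧ b = v) ∧ ¬(a = v ∧ b = u)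
    | Sum.inl a, Sum.inr _ => a = u ∨ a = v
    | Sum.inr _, Sum.inl b => b = u ∨ b = v
    | Sum.inr _, Sum.inr _ => False
  symm := by
    constructor
    rintro (a | a) (b | b) h
    · exact ⟨h.1.symm, fun hc => h.2.2 ⟨hc.2, hc.1⟩, fun hc => h.2.1 ⟨hc.2, hc.1⟩⟩
    · exact h
    · exact h
    · exact h
  loopless := by
    constructor
    rintro (a | a) h
    · exact G.irrefl h.1
    · exact h

instance {V : Type} [DecidableEq V] (G : SimpleGraph V) [DecidableRel G.Adj] (u v : V) :
    DecidableRel (subdivide G u v).Adj := fun x y => by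
  rcases x with a | a <;> rcases y with b | b
  · exact inferInstanceAs (Decidable (G.Adj a b ∧ ¬(a = u ∧ b = v) ∧ ¬(a = v ∧ b = u)))
  · exact inferInstanceAs (Decidable (a = u ∨ a = v))
  · exact inferInstanceAs (Decidable (b = u ∨ b = v))
  · exact inferInstanceAs (Decidable False)

/-- `IsSubdivisionOf H G` : `H` is obtained from `G` (up to isomorphism) by repeatedly
subdividing edges. -/
inductive IsSubdivisionOf : {V W : Type} → SimpleGraph W → SimpleGraph V → Prop
  | iso {V W : Type} {G : SimpleGraph V} {H : SimpleGraph W} :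
      Nonempty (G ≃g H) → IsSubdivisionOf H G
  | step {V W : Type} {G : SimpleGraph V} {H : SimpleGraph W} (u v : V) :
      G.Adj u v → IsSubdivisionOf H (subdivide G u v) → IsSubdivisionOf H G

/-- The graph obtained from `G₁` and `G₂` by identifying `u ∈ V(G₁)` with `v ∈ V(G₂)`;
the merged vertex is `Sum.inl u`. -/
def glue {V₁ V₂ : Type} (G₁ : SimpleGraph V₁) (G₂ : SimpleGraph V₂) (u : V₁) (v : V₂) :
    SimpleGraph (V₁ ⊕ {y : V₂ // y ≠ v}) where
  Adj x y :=
    match x, y with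
    | Sum.inl a, Sum.inl b => G₁.Adj a b
    | Sum.inl a, Sum.inr b => a = u ∧ G₂.Adj v b.1
    | Sum.inr a, Sum.inl b => b = u ∧ G₂.Adj v a.1
    | Sum.inr a, Sum.inr b => G₂.Adj a.1 b.1
  symm := by
    constructor
    rintro (a | a) (b | b) h
    · exact h.symm
    · exact h
    · exact h
    · exact h.symm
  loopless := by
    constructor
    rintro (a | a) h
    · exact G₁.irrefl h
    · exact G₂.irrefl h

instance {V₁ V₂ : Type} [DecidableEq V₁] (G₁ : SimpleGraph V₁) (G₂ : SimpleGraph V₂)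
    [DecidableRel G₁.Adj] [DecidableRel G₂.Adj] (u : V₁) (v : V₂) :
    DecidableRel (glue G₁ G₂ u v).Adj := fun x y => by
  rcases x with a | a <;> rcases y with b | b
  · exact inferInstanceAs (Decidable (G₁.Adj a b))
  · exact inferInstanceAs (Decidable (a = u ∧ G₂.Adj v b.1))
  · exact inferInstanceAs (Decidable (b = u ∧ G₂.Adj v a.1))
  · exact inferInstanceAs (Decidable (G₂.Adj a.1 b.1))

/-- The graph `G - vv₁ - ⋯ - vvₛ + uv₁ + ⋯ + uvₛ`, where `S = {v₁, …, vₛ}`. -/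
def shiftEdges {V : Type} [DecidableEq V] (G : SimpleGraph V) (u v : V) (S : Finset V) :
    SimpleGraph V where
  Adj x y := x ≠ y ∧
    ((G.Adj x y ∧ ¬(x = v ∧ y ∈ S) ∧ ¬(y = v ∧ x ∈ S)) ∨ (x = u ∧ y ∈ S) ∨ (y = u ∧ x ∈ S))
  symm := by
    constructor
    rintro x y ⟨hxy, h⟩
    refine ⟨hxy.symm, ?_⟩
    rcases h with h | h | h
    · exact Or.inl ⟨h.1.symm, h.2.2, h.2.1⟩
    · exact Or.inr (Or.inr h)
    · exact Or.inr (Or.inl h)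
  loopless := ⟨fun x h => h.1 rfl⟩

instance {V : Type} [DecidableEq V] (G : SimpleGraph V) [DecidableRel G.Adj] (u v : V)
    (S : Finset V) : DecidableRel (shiftEdges G u v S).Adj := fun x y =>
  inferInstanceAs (Decidable (_ ∧ _))

/-- The star on `n + 1` vertices, with center `none`. -/
def starGraph (n : ℕ) : SimpleGraph (Option (Fin n)) where
  Adj i j := (i = none ∧ j ≠ none) ∨ (j = none ∧ i ≠ none)
  symm := by
    constructor
    rintro i j (h | h)
    · exact Or.inr h
    · exact Or.inl h
  loopless := by
    constructor
    rintro i (h | h) <;> exact h.2 h.1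

instance (n : ℕ) : DecidableRel (starGraph n).Adj := fun i j =>
  inferInstanceAs (Decidable (_ ∨ _))



section Aux

open Polynomial

lemma charpoly_conj {n : Type} [Fintype n] [DecidableEq n] (P A Q : Matrix n n ℝ)
    (h1 : P * Q = 1) : (P * A * Q).charpoly = A.charpoly := by
  let φ : Matrix n n ℝ →+* Matrix n n ℝ[X] := (Polynomial.C : ℝ →+* ℝ[X]).mapMatrix
  have hc : charmatrix (P * A * Q) = φ P * charmatrix A * φ Q := by
    refine Eq.symm ?_
    have hsc : ∀ M : Matrix n n ℝ, Commute (Matrix.scalar n (X : ℝ[X])) (φ M) :=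
      fun M => Matrix.scalar_commute (X : ℝ[X]) (fun r => Commute.all _ _) (φ M)
    calc φ P * charmatrix A * φ Q
        = φ P * (Matrix.scalar n (X : ℝ[X]) - φ A) * φ Q := rfl
      _ = φ P * Matrix.scalar n (X : ℝ[X]) * φ Q - φ P * φ A * φ Q := by
          rw [Matrix.mul_sub, Matrix.sub_mul]
      _ = Matrix.scalar n (X : ℝ[X]) * (φ P * φ Q) - φ (P * A * Q) := by
          rw [(hsc P).symm.eq, Matrix.mul_assoc ((Matrix.scalar n) X), _root_.map_mul φ,
            _root_.map_mul φ]
      _ = charmatrix (P * A * Q) := by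
          rw [← _root_.map_mul φ, h1, _root_.map_one φ, Matrix.mul_one]; rfl
  have hdet : (φ P).det * (φ Q).det = 1 := by
    rw [← Matrix.det_mul, ← _root_.map_mul φ, h1, _root_.map_one φ, Matrix.det_one]
  unfold Matrix.charpoly
  rw [hc, Matrix.det_mul, Matrix.det_mul]
  linear_combination A.charmatrix.det * hdet

lemma charpoly_diagonal {n : Type} [Fintype n] [DecidableEq n] (d : n → ℝ) :
    (Matrix.diagonal d).charpoly = ∏ i : n, (X - Polynomial.C (d i)) := by
  let e := Fintype.equivFin n
  rw [← Matrix.charpoly_reindex e (Matrix.diagonal d)]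
  have : (Matrix.reindex e e (Matrix.diagonal d)) = Matrix.diagonal (d ∘ e.symm) := by
    rw [Matrix.reindex_apply, Matrix.submatrix_diagonal _ _ e.symm.injective]
  rw [this, Matrix.charpoly_of_upperTriangular _ (Matrix.blockTriangular_diagonal _)]
  rw [← Equiv.prod_comp e.symm (fun i => (X - Polynomial.C (d i)))]
  simp

lemma roots_card_hermitian {n : Type} [Fintype n] [DecidableEq n] {A : Matrix n n ℝ}
    (hA : A.IsHermitian) : A.charpoly.roots.card = Fintype.card n := by
  have hU : ((hA.eigenvectorUnitary : Matrix n n ℝ)) *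
      star (hA.eigenvectorUnitary : Matrix n n ℝ) = 1 :=
    Matrix.mem_unitaryGroup_iff.mp hA.eigenvectorUnitary.2
  rw [hA.spectral_theorem, Unitary.conjStarAlgAut_apply, charpoly_conj _ _ _ hU, charpoly_diagonal]
  have hroots : (∏ i : n, (X - Polynomial.C (((RCLike.ofReal : ℝ → ℝ) ∘ hA.eigenvalues) i))).roots
      = Finset.univ.val.map ((RCLike.ofReal : ℝ → ℝ) ∘ hA.eigenvalues) := by
    rw [Finset.prod_eq_multiset_prod]
    have hmm : Multiset.map
          (fun i => X - Polynomial.C (((RCLike.ofReal : ℝ → ℝ) ∘ hA.eigenvalues) i))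
          Finset.univ.val
        = Multiset.map (fun a => X - Polynomial.C a)
          (Finset.univ.val.map ((RCLike.ofReal : ℝ → ℝ) ∘ hA.eigenvalues)) := by
      rw [Multiset.map_map]; rfl
    rw [hmm, Polynomial.roots_multiset_prod_X_sub_C]
  rw [hroots, Multiset.card_map]
  rfl

lemma mem_roots_of_eig {n : Type} [Fintype n] [DecidableEq n] (A : Matrix n n ℝ) (μ : ℝ)
    (h : n → ℝ) (hh : h ≠ 0) (he : A *ᵥ h = μ • h) : μ ∈ A.charpoly.roots := by
  rw [Polynomial.mem_roots (A.charpoly_monic.ne_zero)]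
  have hmap : (charmatrix A).map (Polynomial.eval μ) = μ • (1 : Matrix n n ℝ) - A := by
    ext i j
    by_cases hij : i = j <;>
      simp [charmatrix_apply, Matrix.diagonal_apply, hij, Matrix.one_apply]
  have hdet : (μ • (1 : Matrix n n ℝ) - A).det = 0 := by
    rw [← Matrix.exists_mulVec_eq_zero_iff]
    refine ⟨h, hh, ?_⟩
    rw [Matrix.sub_mulVec, Matrix.smul_mulVec, Matrix.one_mulVec, he, sub_self]
  show Polynomial.eval μ A.charpoly = 0
  rw [Matrix.charpoly, ← Polynomial.coe_evalRingHom, RingHom.map_det, RingHom.mapMatrix_apply,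
    Polynomial.coe_evalRingHom, hmap]
  exact hdet

lemma exists_adj_of_connected {V : Type} {G : SimpleGraph V} (h : G.Connected)
    {x y : V} (hxy : x ≠ y) : ∃ z, G.Adj x z := by
  obtain ⟨w⟩ := h.preconnected x y
  cases w with
  | nil => exact absurd rfl hxy
  | cons h' p => exact ⟨_, h'⟩

end Aux

lemma le_nthEig {n : Type} [Fintype n] [DecidableEq n] {M : Matrix n n ℝ} {μ : ℝ}
    (hcard : M.charpoly.roots.card = Fintype.card n)
    (hμ : μ ∈ M.charpoly.roots) : μ ≤ nthEig M (Fintype.card n) := by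
  set l := M.charpoly.roots.sort (· ≤ ·) with hl
  have hlen : l.length = Fintype.card n := by rw [hl, Multiset.length_sort, hcard]
  have hml : μ ∈ l := (Multiset.mem_sort _).2 hμ
  obtain ⟨i, hi⟩ := List.mem_iff_get.mp hml
  have hsort : l.Pairwise (· ≤ ·) := M.charpoly.roots.pairwise_sort _
  have hidx : Fintype.card n - 1 < l.length := by have := i.pos; omega
  have hEq : nthEig M (Fintype.card n) = l.get ⟨Fintype.card n - 1, hidx⟩ := by
    unfold nthEig
    rw [← hl, List.getD_eq_getElem l 0 hidx]
    simp [List.get_eq_getElem]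
  rw [hEq, ← hi]
  exact hsort.rel_get_of_le (by simp [Fin.le_def]; have := i.2; omega)


/-- Theorem 4.2: let `G` be obtained from connected graphs `G₁`, `G₂` by identifying
`u ∈ V(G₁)` with `v ∈ V(G₂)`, and let `f₁` be a harmonic eigenfunction associated with
`ρ(𝓛(G₁))`. If `f₁(u) = 0`, then `ρ(𝓛(G)) ≥ ρ(𝓛(G₁))`. -/
theorem stmt15 {V₁ V₂ : Type} [Fintype V₁] [DecidableEq V₁] [Fintype V₂] [DecidableEq V₂]
    (G₁ : SimpleGraph V₁) (G₂ : SimpleGraph V₂) [DecidableRel G₁.Adj] [DecidableRel G₂.Adj]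
    (h₁ : G₁.Connected) (h₂ : G₂.Connected) (u : V₁) (v : V₂) (f₁ : V₁ → ℝ)
    (hf₁ : IsHarmonic G₁ (rhoL G₁) f₁) (hu : f₁ u = 0) :
    rhoL G₁ ≤ rhoL (glue G₁ G₂ u v) := by
  classical
  obtain ⟨hne, heig⟩ := hf₁
  set ρ := rhoL G₁ with hρ
  set G := glue G₁ G₂ u v with hGdef
  obtain ⟨a₀, ha₀⟩ : ∃ a, f₁ a ≠ 0 := by
    by_contra hc; push_neg at hc; exact hne (funext hc)
  have ha₀u : a₀ ≠ u := fun h => ha₀ (h ▸ hu)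
  -- adjacency unfolding
  have adj_ll : ∀ a b : V₁, G.Adj (Sum.inl a) (Sum.inl b) ↔ G₁.Adj a b := fun _ _ => Iff.rfl
  have adj_lr : ∀ (a : V₁) (b : {y : V₂ // y ≠ v}),
      G.Adj (Sum.inl a) (Sum.inr b) ↔ (a = u ∧ G₂.Adj v b.1) := fun _ _ => Iff.rfl
  have adj_rl : ∀ (b : {y : V₂ // y ≠ v}) (a : V₁),
      G.Adj (Sum.inr b) (Sum.inl a) ↔ (a = u ∧ G₂.Adj v b.1) := fun _ _ => Iff.rfl
  have adj_rr : ∀ b c : {y : V₂ // y ≠ v},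
      G.Adj (Sum.inr b) (Sum.inr c) ↔ G₂.Adj b.1 c.1 := fun _ _ => Iff.rfl
  -- the extended function
  set g : V₁ ⊕ {y : V₂ // y ≠ v} → ℝ := Sum.elim f₁ (fun _ => 0) with hg
  -- degree of inl a for a ≠ u
  have dega : ∀ a : V₁, a ≠ u → (G.degree (Sum.inl a) : ℝ) = (G₁.degree a : ℝ) := by
    intro a hau
    rw [SimpleGraph.degree_eq_sum_if_adj, SimpleGraph.degree_eq_sum_if_adj,
      Fintype.sum_sum_type]
    have h2 : ∀ b : {y : V₂ // y ≠ v},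
        (if G.Adj (Sum.inl a) (Sum.inr b) then (1 : ℝ) else 0) = 0 := by
      intro b
      rw [if_neg]
      rw [adj_lr]
      exact fun hadj => hau hadj.1
    rw [Finset.sum_congr rfl (fun b _ => h2 b), Finset.sum_const_zero, add_zero]
    refine Finset.sum_congr rfl fun b _ => ?_
    rw [if_congr (adj_ll a b) rfl rfl]
  have hdegmul : ∀ a : V₁, (G.degree (Sum.inl a) : ℝ) * f₁ a = (G₁.degree a : ℝ) * f₁ a := by
    intro a
    by_cases hau : a = u
    · rw [hau, hu, mul_zero, mul_zero]
    · rw [dega a hau]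
  -- Laplacian eigen-equation for g
  have hnbr : ∀ x : V₁ ⊕ {y : V₂ // y ≠ v},
      ∑ y ∈ G.neighborFinset x, g y = ∑ y : V₁ ⊕ {y : V₂ // y ≠ v},
        if G.Adj x y then g y else 0 := by
    intro x
    rw [SimpleGraph.neighborFinset_eq_filter, Finset.sum_filter]
  have hLg : G.lapMatrix ℝ *ᵥ g = fun x => ρ * ((G.degree x : ℝ) * g x) := by
    funext x
    rw [SimpleGraph.lapMatrix_mulVec_apply, hnbr]
    rcases x with a | b
    · have hsum : (∑ y : V₁ ⊕ {y : V₂ // y ≠ v}, if G.Adj (Sum.inl a) y then g y else 0)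
          = ∑ b ∈ G₁.neighborFinset a, f₁ b := by
        rw [Fintype.sum_sum_type]
        have h2 : ∀ b : {y : V₂ // y ≠ v},
            (if G.Adj (Sum.inl a) (Sum.inr b) then g (Sum.inr b) else 0) = 0 := by
          intro b; split_ifs <;> simp [hg]
        rw [Finset.sum_congr rfl (fun b _ => h2 b), Finset.sum_const_zero, add_zero,
          SimpleGraph.neighborFinset_eq_filter, Finset.sum_filter]
        refine Finset.sum_congr rfl fun b _ => ?_
        rw [if_congr (adj_ll a b) rfl rfl]
        rfl
      rw [hsum]
      have hla := congrFun heig a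
      rw [SimpleGraph.lapMatrix_mulVec_apply] at hla
      show (G.degree (Sum.inl a) : ℝ) * f₁ a - _ = ρ * ((G.degree (Sum.inl a) : ℝ) * f₁ a)
      rw [hdegmul a, hla]
    · have hsum : (∑ y : V₁ ⊕ {y : V₂ // y ≠ v}, if G.Adj (Sum.inr b) y then g y else 0) = 0 := by
        rw [Fintype.sum_sum_type]
        have h1 : ∀ c : V₁, (if G.Adj (Sum.inr b) (Sum.inl c) then g (Sum.inl c) else 0) = 0 := by
          intro c
          split_ifs with hadj
          · have hcu : c = u := ((adj_rl b c).1 hadj).1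
            show f₁ c = 0
            rw [hcu, hu]
          · rfl
        have h2 : ∀ c : {y : V₂ // y ≠ v},
            (if G.Adj (Sum.inr b) (Sum.inr c) then g (Sum.inr c) else 0) = 0 := by
          intro c; split_ifs <;> simp [hg]
        rw [Finset.sum_congr rfl (fun c _ => h1 c), Finset.sum_congr rfl (fun c _ => h2 c)]
        simp
      rw [hsum]
      show (G.degree (Sum.inr b) : ℝ) * 0 - 0 = ρ * ((G.degree (Sum.inr b) : ℝ) * 0)
      ring
  -- positivity of degrees in G
  have hdpos : ∀ x : V₁ ⊕ {y : V₂ // y ≠ v}, 0 < G.degree x := by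
    rintro (a | b)
    · obtain ⟨z, hz⟩ := exists_adj_of_connected h₁
        (x := a) (y := if a = u then a₀ else u) (by
          split_ifs with h
          · rw [h]; exact ha₀u.symm
          · exact h)
      exact (SimpleGraph.degree_pos_iff_exists_adj _ _).2 ⟨Sum.inl z, (adj_ll a z).2 hz⟩
    · obtain ⟨z, hz⟩ := exists_adj_of_connected h₂ (x := b.1) (y := v) b.2
      by_cases hzv : z = v
      · exact (SimpleGraph.degree_pos_iff_exists_adj _ _).2
          ⟨Sum.inl u, (adj_rl b u).2 ⟨rfl, (hzv ▸ hz).symm⟩⟩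
      · exact (SimpleGraph.degree_pos_iff_exists_adj _ _).2
          ⟨Sum.inr ⟨z, hzv⟩, (adj_rr b ⟨z, hzv⟩).2 hz⟩
  have hsqrt_pos : ∀ x, 0 < Real.sqrt (G.degree x) := fun x =>
    Real.sqrt_pos.2 (by exact_mod_cast hdpos x)
  -- the eigenvector of the normalized Laplacian
  set h : V₁ ⊕ {y : V₂ // y ≠ v} → ℝ := fun x => Real.sqrt (G.degree x) * g x with hh
  have hhne : h ≠ 0 := by
    intro h0
    have := congrFun h0 (Sum.inl a₀)
    exact (mul_ne_zero (ne_of_gt (hsqrt_pos (Sum.inl a₀))) ha₀) this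
  have hDg : Matrix.diagonal (fun x => (Real.sqrt (G.degree x : ℝ))⁻¹) *ᵥ h = g := by
    funext x
    rw [Matrix.mulVec_diagonal]
    show (Real.sqrt (G.degree x))⁻¹ * (Real.sqrt (G.degree x) * g x) = g x
    rw [← mul_assoc, inv_mul_cancel₀ (ne_of_gt (hsqrt_pos x)), one_mul]
  have heigG : normLap G *ᵥ h = ρ • h := by
    rw [normLap, ← Matrix.mulVec_mulVec, ← Matrix.mulVec_mulVec, hDg, hLg]
    funext x
    rw [Matrix.mulVec_diagonal]
    have hd : (G.degree x : ℝ) = Real.sqrt (G.degree x) * Real.sqrt (G.degree x) :=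
      (Real.mul_self_sqrt (by positivity)).symm
    show (Real.sqrt (G.degree x))⁻¹ * (ρ * ((G.degree x : ℝ) * g x)) = ρ • h x
    rw [hd]
    show _ = ρ * (Real.sqrt (G.degree x) * g x)
    field_simp [ne_of_gt (hsqrt_pos x)]
    rw [Real.sqrt_sq (Real.sqrt_nonneg _)]
  -- the normalized Laplacian is symmetric
  have hherm : (normLap G).IsHermitian := by
    rw [normLap, Matrix.IsHermitian, Matrix.conjTranspose_eq_transpose_of_trivial,
      Matrix.transpose_mul, Matrix.transpose_mul, Matrix.diagonal_transpose,
      (G.isSymm_lapMatrix (R := ℝ)).eq, Matrix.mul_assoc]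
  have hmem := mem_roots_of_eig (normLap G) ρ h hhne heigG
  have hcard := roots_card_hermitian hherm
  exact le_nthEig hcard hmem


end NLap
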